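/- Let $\mathbb{K}$ be a field of characteristic zero, $n \geq 1$, $d \geq 2$, and let $R = \mathbb{K}[x_0,\dots,x_n]/(x_0^{d-1},\dots,x_n^{d-1})$ be the Jacobian ring of the Fermat hypersurface of degree $d$. Then for all $0 \leq a \leq N := (n+1)(d-2)$, the multiplication map $R^a \times R^{N-a} \to R^N$ is a perfect pairing; in particular $\dim_{\mathbb{K}} R^a = \dim_{\mathbb{K}} R^{N-a}$ and $\dim_{\mathbb{K}} R^N = 1$ with $R^N$ spanned by the class of $(\prod_{i=0}^n x_i)^{d-2}$. -/

import Mathlib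

open MvPolynomial Module

/-- The degree-`k` graded piece of the quotient of the polynomial ring by a
(homogeneous) ideal `I`: the image of the homogeneous polynomials of degree `k`. -/
noncomputable def gradedPiece {𝕂 : Type*} [Field 𝕂] {n : ℕ}
    (I : Ideal (MvPolynomial (Fin n) 𝕂)) (k : ℕ) :
    Submodule 𝕂 (MvPolynomial (Fin n) 𝕂 ⧸ I) :=
  (MvPolynomial.homogeneousSubmodule (Fin n) 𝕂 k).map (Ideal.Quotient.mkₐ 𝕂 I).toLinearMap

namespace Stmt15Aux

open scoped Classical

variable {𝕂 : Type*} [Field 𝕂] {n d : ℕ}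

/-- The top exponent vector `(d-2, …, d-2)`. -/
noncomputable def T (n d : ℕ) : Fin (n + 1) →₀ ℕ := Finsupp.equivFunOnFinite.symm fun _ => d - 2

@[simp] lemma T_apply (i : Fin (n + 1)) : T n d i = d - 2 := rfl

/-- The exponent vectors of the monomial basis of the degree-`a` piece. -/
noncomputable def B (n d a : ℕ) : Finset (Fin (n + 1) →₀ ℕ) :=
  (Finset.Iic (T n d)).filter fun m => ∑ i, m i = a

lemma mem_B {a : ℕ} {m : Fin (n + 1) →₀ ℕ} :
    m ∈ B n d a ↔ (∀ i, m i ≤ d - 2) ∧ ∑ i, m i = a := by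
  simp [B, Finset.mem_filter, Finset.mem_Iic, Finsupp.le_def]

lemma deg_eq (m : Fin (n + 1) →₀ ℕ) : m.degree = ∑ i, m i :=
  Finset.sum_subset (Finset.subset_univ _) fun i _ hi => by
    simpa using Finsupp.notMem_support_iff.mp hi

lemma sum_T : ∑ i, T n d i = (n + 1) * (d - 2) := by
  simp [Finset.sum_const, Finset.card_univ, mul_comm]

lemma memJ (p : MvPolynomial (Fin (n + 1)) 𝕂) :
    p ∈ Ideal.span (Set.range fun i : Fin (n + 1) =>
        (X i : MvPolynomial (Fin (n + 1)) 𝕂) ^ (d - 1)) ↔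
      ∀ m ∈ p.support, ∃ i, d - 1 ≤ m i := by
  have h1 : (Set.range fun i : Fin (n + 1) => (X i : MvPolynomial (Fin (n + 1)) 𝕂) ^ (d - 1))
      = (fun s => monomial s (1 : 𝕂)) ''
          (Set.range fun i : Fin (n + 1) => Finsupp.single i (d - 1)) := by
    rw [← Set.range_comp]
    apply congrArg
    funext i
    simp [Function.comp, X_pow_eq_monomial]
  rw [h1, mem_ideal_span_monomial_image]
  refine forall₂_congr fun m hm => ?_
  constructor
  · rintro ⟨si, ⟨i, rfl⟩, hle⟩
    exact ⟨i, Finsupp.single_le_iff.mp hle⟩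
  · rintro ⟨i, hi⟩
    exact ⟨Finsupp.single i (d - 1), ⟨i, rfl⟩, Finsupp.single_le_iff.mpr hi⟩

/-- Every element of a graded piece has a representative supported on good monomials. -/
lemma exists_rep (J : Ideal (MvPolynomial (Fin (n + 1)) 𝕂))
    (hJ : J = Ideal.span (Set.range fun i : Fin (n + 1) =>
      (X i : MvPolynomial (Fin (n + 1)) 𝕂) ^ (d - 1)))
    {a : ℕ} {x : MvPolynomial (Fin (n + 1)) 𝕂 ⧸ J} (hx : x ∈ gradedPiece J a) :
    ∃ q : MvPolynomial (Fin (n + 1)) 𝕂,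
      Ideal.Quotient.mk J q = x ∧ ∀ m ∈ q.support, m ∈ B n d a := by
  simp only [gradedPiece, Submodule.mem_map, mem_homogeneousSubmodule, AlgHom.toLinearMap_apply,
    Ideal.Quotient.mkₐ_eq_mk] at hx
  obtain ⟨p, hp, rfl⟩ := hx
  set s : Finset (Fin (n + 1) →₀ ℕ) := p.support.filter (fun m => ∀ i, m i ≤ d - 2) with hs
  have hcoeff : ∀ m₀, coeff m₀ (∑ m ∈ s, monomial m (coeff m p))
      = if m₀ ∈ s then coeff m₀ p else 0 := by
    intro m₀
    rw [coeff_sum]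
    simp_rw [coeff_monomial]
    exact Finset.sum_ite_eq' s m₀ (fun m => coeff m p)
  refine ⟨∑ m ∈ s, monomial m (coeff m p), ?_, ?_⟩
  · rw [Ideal.Quotient.eq, hJ, memJ]
    intro m hm
    have hm' := mem_support_iff.mp hm
    rw [coeff_sub, hcoeff] at hm'
    by_cases h : m ∈ s
    · simp [h] at hm'
    · rw [if_neg h, zero_sub, neg_ne_zero] at hm'
      have hmp : m ∈ p.support := mem_support_iff.mpr hm'
      have : ¬ ∀ i, m i ≤ d - 2 := fun hall => h (Finset.mem_filter.mpr ⟨hmp, hall⟩)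
      push_neg at this
      obtain ⟨i, hi⟩ := this
      exact ⟨i, by omega⟩
  · intro m hm
    have hm' := mem_support_iff.mp hm
    rw [hcoeff] at hm'
    have h : m ∈ s := by by_contra h; simp [h] at hm'
    have h1 := Finset.mem_filter.mp h
    refine mem_B.mpr ⟨h1.2, ?_⟩
    have := hp (mem_support_iff.mp h1.1)
    rw [← deg_eq]
    rwa [Finsupp.degree_eq_weight_one]

lemma hsm (J : Ideal (MvPolynomial (Fin (n + 1)) 𝕂)) (c : 𝕂) (z : MvPolynomial (Fin (n + 1)) 𝕂) :
    Ideal.Quotient.mk J (c • z) = c • Ideal.Quotient.mk J z :=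
  map_smul (Ideal.Quotient.mkₐ 𝕂 J) c z

lemma graded_eq_span (J : Ideal (MvPolynomial (Fin (n + 1)) 𝕂))
    (hJ : J = Ideal.span (Set.range fun i : Fin (n + 1) =>
      (X i : MvPolynomial (Fin (n + 1)) 𝕂) ^ (d - 1))) (a : ℕ) :
    gradedPiece J a = Submodule.span 𝕂
      (((B n d a).image fun m => Ideal.Quotient.mk J (monomial m (1 : 𝕂))) : Finset _) := by
  apply le_antisymm
  · intro x hx
    obtain ⟨q, rfl, hq⟩ := exists_rep J hJ hx
    rw [q.as_sum, map_sum]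
    apply Submodule.sum_mem
    intro m hm
    have h1 : (monomial m) (coeff m q) = coeff m q • (monomial m) (1 : 𝕂) := by
      rw [smul_monomial, smul_eq_mul, mul_one]
    rw [h1, hsm]
    exact Submodule.smul_mem _ _ (Submodule.subset_span
      (Finset.mem_coe.mpr (Finset.mem_image_of_mem _ (hq m hm))))
  · rw [Submodule.span_le]
    intro x hx
    simp only [Finset.coe_image, Set.mem_image, Finset.mem_coe] at hx
    obtain ⟨m, hm, rfl⟩ := hx
    simp only [SetLike.mem_coe, gradedPiece, Submodule.mem_map, mem_homogeneousSubmodule,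
      AlgHom.toLinearMap_apply, Ideal.Quotient.mkₐ_eq_mk]
    exact ⟨monomial m 1, isHomogeneous_monomial 1 (by rw [deg_eq]; exact (mem_B.mp hm).2), rfl⟩

lemma linind (hd : 2 ≤ d) (J : Ideal (MvPolynomial (Fin (n + 1)) 𝕂))
    (hJ : J = Ideal.span (Set.range fun i : Fin (n + 1) =>
      (X i : MvPolynomial (Fin (n + 1)) 𝕂) ^ (d - 1))) (a : ℕ) :
    LinearIndependent 𝕂 (fun m : (B n d a : Finset _) =>
      Ideal.Quotient.mk J (monomial (m : Fin (n + 1) →₀ ℕ) (1 : 𝕂))) := by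
  rw [Fintype.linearIndependent_iff]
  intro g hg
  set c : (Fin (n + 1) →₀ ℕ) → 𝕂 := fun m => if h : m ∈ B n d a then g ⟨m, h⟩ else 0 with hc
  have hsum : ∑ i : (B n d a : Finset _),
      Ideal.Quotient.mk J (monomial (i : Fin (n + 1) →₀ ℕ) (c i)) = 0 := by
    rw [← hg]
    refine Finset.sum_congr rfl fun i _ => ?_
    have : c (i : Fin (n + 1) →₀ ℕ) = g i := by rw [hc]; simp
    rw [this]
    have h1 : (monomial (i : Fin (n + 1) →₀ ℕ)) (g i)
        = g i • (monomial (i : Fin (n + 1) →₀ ℕ)) (1 : 𝕂) := by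
      rw [smul_monomial, smul_eq_mul, mul_one]
    rw [h1, hsm]
  have hP : Ideal.Quotient.mk J (∑ m ∈ B n d a, monomial m (c m)) = 0 := by
    rw [map_sum, ← Finset.sum_attach (B n d a)
      (fun m => Ideal.Quotient.mk J (monomial m (c m))), ← hsum]
    rw [Finset.univ_eq_attach]
  have hmem := Ideal.Quotient.eq_zero_iff_mem.mp hP
  rw [hJ, memJ] at hmem
  intro i
  by_contra hne
  have hco : coeff (i : Fin (n + 1) →₀ ℕ) (∑ m ∈ B n d a, monomial m (c m))
      = c (i : Fin (n + 1) →₀ ℕ) := by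
    rw [coeff_sum]
    simp_rw [coeff_monomial]
    rw [Finset.sum_ite_eq' (B n d a) _ c, if_pos i.2]
  have hci : c (i : Fin (n + 1) →₀ ℕ) ≠ 0 := by rw [hc]; simpa using hne
  obtain ⟨j, hj⟩ := hmem _ (mem_support_iff.mpr (hco ▸ hci))
  have := (mem_B.mp i.2).1 j
  omega

lemma finrank_graded (hd : 2 ≤ d) (J : Ideal (MvPolynomial (Fin (n + 1)) 𝕂))
    (hJ : J = Ideal.span (Set.range fun i : Fin (n + 1) =>
      (X i : MvPolynomial (Fin (n + 1)) 𝕂) ^ (d - 1))) (a : ℕ) :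
    finrank 𝕂 (gradedPiece J a) = (B n d a).card := by
  rw [graded_eq_span J hJ a]
  have hind := (linind hd J hJ a).linearIndepOn_id
  have hinj : Set.InjOn (fun m => Ideal.Quotient.mk J (monomial m (1 : 𝕂))) (B n d a) := by
    intro m1 h1 m2 h2 he
    by_contra hne
    have hmem : (monomial m1 (1 : 𝕂) - monomial m2 1) ∈ J := Ideal.Quotient.eq.mp he
    rw [hJ, memJ] at hmem
    have hsupp : m1 ∈ (monomial m1 (1 : 𝕂) - monomial m2 1).support := by
      rw [MvPolynomial.mem_support_iff, coeff_sub, coeff_monomial, coeff_monomial, if_pos rfl,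
        if_neg (fun h => hne h.symm)]
      norm_num
    obtain ⟨j, hj⟩ := hmem m1 hsupp
    have := (mem_B.mp h1).1 j
    omega
  have hrange : Set.range (fun m : (B n d a : Finset _) =>
      Ideal.Quotient.mk J (monomial (m : Fin (n + 1) →₀ ℕ) (1 : 𝕂)))
      = (((B n d a).image fun m => Ideal.Quotient.mk J (monomial m (1 : 𝕂))) : Finset _) := by
    ext x
    simp
  rw [hrange] at hind
  rw [finrank_span_finset_eq_card hind, Finset.card_image_of_injOn hinj]

lemma sum_sub {m : Fin (n + 1) →₀ ℕ} (hb : ∀ i, m i ≤ d - 2) :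
    ∑ i, (T n d - m) i + ∑ i, m i = (n + 1) * (d - 2) := by
  rw [← Finset.sum_add_distrib, ← sum_T (n := n) (d := d)]
  refine Finset.sum_congr rfl fun i _ => ?_
  rw [Finsupp.tsub_apply, T_apply]
  have := hb i
  omega

lemma card_B (hd : 2 ≤ d) {a : ℕ} (ha : a ≤ (n + 1) * (d - 2)) :
    (B n d a).card = (B n d ((n + 1) * (d - 2) - a)).card := by
  apply Finset.card_bij (fun m _ => T n d - m)
  · intro m hm
    obtain ⟨hb, hsum⟩ := mem_B.mp hm
    have h1 := sum_sub (n := n) (d := d) hb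
    exact mem_B.mpr ⟨fun i => by rw [Finsupp.tsub_apply, T_apply]; omega, by omega⟩
  · intro m1 h1 m2 h2 he
    obtain ⟨hb1, _⟩ := mem_B.mp h1
    obtain ⟨hb2, _⟩ := mem_B.mp h2
    ext i
    have hei := DFunLike.congr_fun he i
    rw [Finsupp.tsub_apply, Finsupp.tsub_apply, T_apply] at hei
    have := hb1 i
    have := hb2 i
    omega
  · intro m' hm'
    obtain ⟨hb, hsum⟩ := mem_B.mp hm'
    have h1 := sum_sub (n := n) (d := d) hb
    refine ⟨T n d - m', mem_B.mpr ⟨fun i => by rw [Finsupp.tsub_apply, T_apply]; omega,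
      by omega⟩, ?_⟩
    ext i
    rw [Finsupp.tsub_apply, Finsupp.tsub_apply, T_apply]
    have := hb i
    omega

lemma B_top (hd : 2 ≤ d) : B n d ((n + 1) * (d - 2)) = {T n d} := by
  ext m
  rw [mem_B, Finset.mem_singleton]
  constructor
  · rintro ⟨hb, hsum⟩
    rw [← sum_T (n := n) (d := d)] at hsum
    have := (Finset.sum_eq_sum_iff_of_le (fun i _ => hb i)).mp hsum
    ext i
    exact this i (Finset.mem_univ i)
  · rintro rfl
    exact ⟨fun i => le_refl _, sum_T⟩

lemma prod_X_top :
    ((∏ i : Fin (n + 1), (X i : MvPolynomial (Fin (n + 1)) 𝕂)) ^ (d - 2))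
      = monomial (T n d) 1 := by
  have h : ∏ x ∈ (T n d).support, (X x : MvPolynomial (Fin (n + 1)) 𝕂) ^ (T n d x)
      = ∏ x : Fin (n + 1), X x ^ (T n d x) :=
    Finset.prod_subset (Finset.subset_univ _)
      (fun x _ hx => by rw [Finsupp.notMem_support_iff.mp hx, pow_zero])
  rw [← Finset.prod_pow, ← prod_X_pow_eq_monomial, h]
  exact Finset.prod_congr rfl fun x _ => by simp only [T_apply]

lemma top_ne (hd : 2 ≤ d) (J : Ideal (MvPolynomial (Fin (n + 1)) 𝕂))
    (hJ : J = Ideal.span (Set.range fun i : Fin (n + 1) =>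
      (X i : MvPolynomial (Fin (n + 1)) 𝕂) ^ (d - 1))) :
    Ideal.Quotient.mk J (monomial (T n d) (1 : 𝕂)) ≠ 0 := by
  rw [Ne, Ideal.Quotient.eq_zero_iff_mem, hJ, memJ]
  push_neg
  refine ⟨T n d, ?_, fun i => by rw [T_apply]; omega⟩
  rw [MvPolynomial.mem_support_iff, coeff_monomial, if_pos rfl]
  norm_num

end Stmt15Aux


open Stmt15Aux

/-- For the Jacobian ring `R = 𝕂[x₀,…,xₙ]/(x₀^(d-1),…,xₙ^(d-1))` of the
Fermat hypersurface of degree `d` (char 𝕂 = 0, `n ≥ 1`, `d ≥ 2`) and `N = (n+1)(d-2)`: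
for all `a ≤ N` the multiplication pairing `R^a × R^(N-a) → R^N` is perfect
(nondegenerate, with `dim R^a = dim R^(N-a)`), `dim R^N = 1`, and `R^N` is spanned by the
class of `(∏ xᵢ)^(d-2)`. -/
theorem stmt15 {𝕂 : Type*} [Field 𝕂] [CharZero 𝕂] (n d : ℕ) (hn : 1 ≤ n) (hd : 2 ≤ d)
    (J : Ideal (MvPolynomial (Fin (n + 1)) 𝕂))
    (hJ : J = Ideal.span (Set.range fun i : Fin (n + 1) =>
      (X i : MvPolynomial (Fin (n + 1)) 𝕂) ^ (d - 1)))
    (N : ℕ) (hN : N = (n + 1) * (d - 2)) :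
    (∀ a ≤ N, ∀ x ∈ gradedPiece J a, x ≠ 0 →
        ∃ y ∈ gradedPiece J (N - a), x * y ≠ 0) ∧
    (∀ a ≤ N, finrank 𝕂 (gradedPiece J a) = finrank 𝕂 (gradedPiece J (N - a))) ∧
    finrank 𝕂 (gradedPiece J N) = 1 ∧
    gradedPiece J N = Submodule.span 𝕂
      {Ideal.Quotient.mk J ((∏ i : Fin (n + 1), (X i : MvPolynomial (Fin (n + 1)) 𝕂)) ^ (d - 2))} := by
  subst hN
  classical
  refine ⟨?_, ?_, ?_, ?_⟩
  · intro a ha x hx hx0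
    obtain ⟨q, rfl, hq⟩ := exists_rep J hJ hx
    have hq0 : q ≠ 0 := fun h => hx0 (by rw [h, map_zero])
    obtain ⟨m₀, hm₀⟩ := MvPolynomial.support_nonempty.mpr hq0
    obtain ⟨hb, hsumq⟩ := mem_B.mp (hq m₀ hm₀)
    have hss := sum_sub (n := n) (d := d) hb
    refine ⟨Ideal.Quotient.mk J (monomial (T n d - m₀) 1), ?_, ?_⟩
    · simp only [gradedPiece, Submodule.mem_map, mem_homogeneousSubmodule,
        AlgHom.toLinearMap_apply, Ideal.Quotient.mkₐ_eq_mk]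
      refine ⟨monomial (T n d - m₀) 1, isHomogeneous_monomial 1 ?_, rfl⟩
      rw [deg_eq]
      omega
    · rw [← map_mul, Ne, Ideal.Quotient.eq_zero_iff_mem, hJ, memJ]
      push_neg
      refine ⟨T n d, ?_, fun i => by rw [T_apply]; omega⟩
      have heq : m₀ + (T n d - m₀) = T n d := by
        ext i
        rw [Finsupp.add_apply, Finsupp.tsub_apply, T_apply]
        have := hb i
        omega
      have hco := coeff_mul_monomial m₀ (T n d - m₀) (1 : 𝕂) q
      rw [heq, mul_one] at hco
      rw [MvPolynomial.mem_support_iff, hco]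
      exact MvPolynomial.mem_support_iff.mp hm₀
  · intro a ha
    rw [finrank_graded hd J hJ, finrank_graded hd J hJ]
    exact card_B hd ha
  · rw [finrank_graded hd J hJ, B_top hd, Finset.card_singleton]
  · rw [graded_eq_span J hJ, B_top hd, Finset.image_singleton, Finset.coe_singleton, prod_X_top]
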